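/- Let c be a copula density, continuous and strictly positive on (0,1)², with C(u,v) = ∫₀^u ∫₀^v c and h(u,v) = ∂C(u,v)/∂v. Let X have continuous strictly increasing CDF F_X with density f_X, let U ~ Uniform(0,1) be independent of X, and let F_Y be a continuous strictly increasing CDF with density f_Y. Define Y = F_Y⁻¹( h⁻¹(U, F_X(X)) ). Then the joint density of (X,Y) is f_X(x) · f_Y(y) · c(F_Y(y), F_X(x)); in particular, the conditional CDF of Y given X = x is y ↦ h(F_Y(y), F_X(x)) and the marginal distribution of Y is F_Y. -/

import Mathlib

open Set MeasureTheory ProbabilityTheory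

open Filter Topology

private lemma aux_int {f F : ℝ → ℝ} (hf : ∀ x, 0 ≤ f x)
    (hF : ∀ x, F x = ∫ t in Iic x, f t) (hmono : StrictMono F) (x : ℝ) :
    IntegrableOn f (Iic x) := by
  by_contra hcon
  have h0 : F x = 0 := by rw [hF]; exact integral_undef hcon
  have h2 : 0 ≤ F (x - 1) := by
    rw [hF]; exact setIntegral_nonneg measurableSet_Iic fun t _ => hf t
  have h1 : F (x - 1) < F x := hmono (by linarith)
  linarith

private lemma aux_cdf {f F : ℝ → ℝ} (hf : ∀ x, 0 ≤ f x)
    (hF : ∀ x, F x = ∫ t in Iic x, f t) (hmono : StrictMono F) (x : ℝ) :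
    (volume.withDensity fun t => ENNReal.ofReal (f t)) (Iic x) = ENNReal.ofReal (F x) := by
  rw [withDensity_apply _ measurableSet_Iic, hF]
  exact (ofReal_integral_eq_lintegral_ofReal (aux_int hf hF hmono x) (ae_of_all _ hf)).symm

private lemma aux_univ_eq : (⋃ n : ℕ, Iic (n : ℝ)) = univ :=
  eq_univ_of_forall fun x => mem_iUnion.2 ⟨⌈x⌉₊, Nat.le_ceil x⟩

private lemma aux_mono_Iic : Monotone fun n : ℕ => Iic (n : ℝ) :=
  fun a b hab => Iic_subset_Iic.2 (by exact_mod_cast hab)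

private lemma aux_fin {f F : ℝ → ℝ} (hf : ∀ x, 0 ≤ f x)
    (hF : ∀ x, F x = ∫ t in Iic x, f t) (hmono : StrictMono F) (hle : ∀ x, F x ≤ 1) :
    IsFiniteMeasure (volume.withDensity fun t => ENNReal.ofReal (f t)) := by
  set ν := volume.withDensity fun t => ENNReal.ofReal (f t) with hν
  have h := tendsto_measure_iUnion_atTop (μ := ν) aux_mono_Iic
  rw [aux_univ_eq] at h
  have hbd : ν univ ≤ 1 := le_of_tendsto' h fun n => by
    show ν (Iic (n : ℝ)) ≤ 1
    rw [hν, aux_cdf hf hF hmono]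
    exact ENNReal.ofReal_le_one.2 (hle _)
  exact ⟨lt_of_le_of_lt hbd (by norm_num)⟩

private lemma aux_univ_one {f F : ℝ → ℝ} (hf : ∀ x, 0 ≤ f x)
    (hF : ∀ x, F x = ∫ t in Iic x, f t) (hmono : StrictMono F)
    (htop : Tendsto F atTop (𝓝 1)) :
    (volume.withDensity fun t => ENNReal.ofReal (f t)) univ = 1 := by
  set ν := volume.withDensity fun t => ENNReal.ofReal (f t) with hν
  have h := tendsto_measure_iUnion_atTop (μ := ν) aux_mono_Iic
  rw [aux_univ_eq] at h
  have hfe : (ν ∘ fun n : ℕ => Iic (n : ℝ)) = fun n : ℕ => ENNReal.ofReal (F n) :=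
    funext fun n => aux_cdf hf hF hmono _
  rw [hfe] at h
  have h2 : Tendsto (fun n : ℕ => ENNReal.ofReal (F n)) atTop (𝓝 (ENNReal.ofReal 1)) :=
    (ENNReal.continuous_ofReal.tendsto 1).comp (htop.comp tendsto_natCast_atTop_atTop)
  simpa using tendsto_nhds_unique h h2

private lemma aux_map {f F : ℝ → ℝ} (hf : ∀ x, 0 ≤ f x)
    (hF : ∀ x, F x = ∫ t in Iic x, f t) (hmono : StrictMono F) (hcont : Continuous F)
    (hrange : ∀ x, F x ∈ Ioo (0:ℝ) 1) (htop : Tendsto F atTop (𝓝 1))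
    (hbot : Tendsto F atBot (𝓝 0)) :
    (volume.withDensity fun t => ENNReal.ofReal (f t)).map F = volume.restrict (Ioo 0 1) := by
  set ν := volume.withDensity fun t => ENNReal.ofReal (f t) with hν
  haveI : IsFiniteMeasure ν := aux_fin hf hF hmono fun x => (hrange x).2.le
  refine Measure.ext_of_Iic (ν.map F) _ fun a => ?_
  rw [Measure.map_apply hcont.measurable measurableSet_Iic,
      Measure.restrict_apply measurableSet_Iic]
  rcases le_or_gt a 0 with ha0 | ha0
  · have h1 : F ⁻¹' Iic a = ∅ :=
      eq_empty_iff_forall_notMem.2 fun x (hx : F x ≤ a) =>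
        absurd (hx.trans ha0) (not_le.2 (hrange x).1)
    have h2 : Iic a ∩ Ioo 0 1 = ∅ :=
      eq_empty_iff_forall_notMem.2 fun u ⟨hu1, hu2, _⟩ => absurd (hu1.trans ha0) (not_le.2 hu2)
    simp [h1, h2]
  rcases lt_or_ge a 1 with ha1 | ha1
  · obtain ⟨x₁, hx₁⟩ := (htop.eventually_const_lt ha1).exists
    obtain ⟨x₂, hx₂⟩ := (hbot.eventually_lt_const ha0).exists
    have hlt : x₂ < x₁ := hmono.lt_iff_lt.1 (by linarith)
    obtain ⟨x₀, -, hx₀⟩ := intermediate_value_Ioo hlt.le hcont.continuousOn ⟨hx₂, hx₁⟩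
    have hpre : F ⁻¹' Iic a = Iic x₀ := by
      ext x
      simp only [mem_preimage, mem_Iic, ← hx₀]
      exact hmono.le_iff_le
    have h2 : Iic a ∩ Ioo 0 1 = Ioc 0 a := by
      ext u
      constructor
      · rintro ⟨h1, h2, _⟩; exact ⟨h2, h1⟩
      · rintro ⟨h1, h2⟩; exact ⟨h2, h1, lt_of_le_of_lt h2 ha1⟩
    rw [hpre, hν, aux_cdf hf hF hmono, hx₀, h2, Real.volume_Ioc, sub_zero]
  · have hpre : F ⁻¹' Iic a = univ := eq_univ_of_forall fun x => (hrange x).2.le.trans ha1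
    have h2 : Iic a ∩ Ioo 0 1 = Ioo 0 1 :=
      inter_eq_self_of_subset_right fun u hu => hu.2.le.trans ha1
    rw [hpre, h2, hν, aux_univ_one hf hF hmono htop, Real.volume_Ioo, sub_zero,
      ENNReal.ofReal_one]

private lemma aux_tendsto_top {F : ℝ → ℝ} (hmono : StrictMono F)
    (hrange : ∀ x, F x ∈ Ioo (0:ℝ) 1)
    (hseq : Tendsto (fun n : ℕ => F n) atTop (𝓝 1)) : Tendsto F atTop (𝓝 1) := by
  have hbdd : BddAbove (range F) := ⟨1, by rintro _ ⟨x, rfl⟩; exact (hrange x).2.le⟩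
  have h := tendsto_atTop_ciSup hmono.monotone hbdd
  have h2 := h.comp (tendsto_natCast_atTop_atTop (R := ℝ))
  rwa [tendsto_nhds_unique h2 hseq] at h

private lemma aux_tendsto_bot {F : ℝ → ℝ} (hmono : StrictMono F)
    (hrange : ∀ x, F x ∈ Ioo (0:ℝ) 1)
    (hseq : Tendsto (fun n : ℕ => F (-(n:ℝ))) atTop (𝓝 0)) : Tendsto F atBot (𝓝 0) := by
  have hbdd : BddBelow (range F) := ⟨0, by rintro _ ⟨x, rfl⟩; exact (hrange x).1.le⟩
  have h := tendsto_atBot_ciInf hmono.monotone hbdd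
  have h2 := h.comp (tendsto_neg_atTop_atBot.comp (tendsto_natCast_atTop_atTop (R := ℝ)))
  rwa [tendsto_nhds_unique h2 hseq] at h

private lemma aux_ofReal_tendsto {G : ℕ → ℝ} {c : ℝ} (hG : ∀ n, 0 ≤ G n) (hc : 0 ≤ c)
    (h : Tendsto (fun n => ENNReal.ofReal (G n)) atTop (𝓝 (ENNReal.ofReal c))) :
    Tendsto G atTop (𝓝 c) := by
  have h2 := (ENNReal.tendsto_toReal ENNReal.ofReal_ne_top).comp h
  simpa [Function.comp_def, ENNReal.toReal_ofReal, hG, hc] using h2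

/-- Correctness of one step of the simulation algorithm: if
`Y = F_Y⁻¹(h⁻¹(U, F_X(X)))` with `U ~ Uniform(0,1)` independent of `X`, then
`(X,Y)` has joint density `f_X(x) f_Y(y) c(F_Y(y), F_X(x))`; in particular the
conditional CDF of `Y` given `X = x` is `y ↦ h(F_Y(y), F_X(x))` and the marginal
distribution of `Y` is `F_Y`. -/
theorem simulation_step_correct
    (c : ℝ → ℝ → ℝ) (hc_cont : ContinuousOn (Function.uncurry c) (Ioo 0 1 ×ˢ Ioo 0 1))
    (hc_meas : Measurable (Function.uncurry c))
    (hc_pos : ∀ u ∈ Ioo (0:ℝ) 1, ∀ v ∈ Ioo (0:ℝ) 1, 0 < c u v)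
    (hc_marg1 : ∀ v ∈ Ioo (0:ℝ) 1, (∫ u in (0:ℝ)..1, c u v) = 1)
    (hc_marg2 : ∀ u ∈ Ioo (0:ℝ) 1, (∫ v in (0:ℝ)..1, c u v) = 1)
    (h : ℝ → ℝ → ℝ) (hdef : ∀ u v : ℝ, h u v = ∫ s in (0:ℝ)..u, c s v)
    (hinv : ℝ → ℝ → ℝ)
    (hhinv : ∀ v ∈ Ioo (0:ℝ) 1, ∀ u ∈ Icc (0:ℝ) 1,
      h (hinv u v) v = u ∧ hinv (h u v) v = u ∧ hinv u v ∈ Icc (0:ℝ) 1)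
    (fX fY : ℝ → ℝ) (FX FY : ℝ → ℝ)
    (hfX : Measurable fX) (hfY : Measurable fY)
    (hfXpos : ∀ x, 0 ≤ fX x) (hfYpos : ∀ y, 0 ≤ fY y)
    (hFX : ∀ x : ℝ, FX x = ∫ t in Iic x, fX t)
    (hFY : ∀ y : ℝ, FY y = ∫ t in Iic y, fY t)
    (hFXmono : StrictMono FX) (hFYmono : StrictMono FY)
    (hFXcont : Continuous FX) (hFYcont : Continuous FY)
    (hFXrange : ∀ x, FX x ∈ Ioo (0:ℝ) 1) (hFYrange : ∀ y, FY y ∈ Ioo (0:ℝ) 1)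
    (FYinv : ℝ → ℝ)
    (hFYinv : (∀ y : ℝ, FYinv (FY y) = y) ∧ ∀ u ∈ Ioo (0:ℝ) 1, FY (FYinv u) = u)
    {Ω : Type*} [MeasurableSpace Ω] (μ : Measure Ω) [IsProbabilityMeasure μ]
    (X U : Ω → ℝ) (hXmeas : Measurable X) (hUmeas : Measurable U)
    (hindep : IndepFun X U μ)
    (hXcdf : ∀ x : ℝ, μ {ω | X ω ≤ x} = ENNReal.ofReal (FX x))
    (hUunif : ∀ u ∈ Icc (0:ℝ) 1, μ {ω | U ω ≤ u} = ENNReal.ofReal u)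
    (hU01 : ∀ᵐ ω ∂μ, U ω ∈ Ioo (0:ℝ) 1)
    (Y : Ω → ℝ) (hY : ∀ ω, Y ω = FYinv (hinv (U ω) (FX (X ω)))) :
    (Measure.map (fun ω => (X ω, Y ω)) μ =
      volume.withDensity
        (fun p => ENNReal.ofReal (fX p.1 * fY p.2 * c (FY p.2) (FX p.1)))) ∧
    (∀ x y : ℝ, μ {ω | X ω ≤ x ∧ Y ω ≤ y} =
      ENNReal.ofReal (∫ t in Iic x, h (FY y) (FX t) * fX t)) ∧
    (∀ y : ℝ, μ {ω | Y ω ≤ y} = ENNReal.ofReal (FY y)) := by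
  -- measurability of slices of c
  have hmeas_cv : ∀ v : ℝ, Measurable fun s => c s v := fun v =>
    hc_meas.comp (measurable_id.prodMk measurable_const)
  have hmeas_cu : ∀ u : ℝ, Measurable fun v => c u v := fun u =>
    hc_meas.comp (measurable_const.prodMk measurable_id)
  -- integrability of slices
  have hInt1 : ∀ v ∈ Ioo (0:ℝ) 1, IntegrableOn (fun s => c s v) (Ioc 0 1) volume := by
    intro v hv
    by_contra hcon
    have := hc_marg1 v hv
    rw [intervalIntegral.integral_of_le zero_le_one, integral_undef hcon] at this
    norm_num at this
  have hInt2 : ∀ u ∈ Ioo (0:ℝ) 1, IntegrableOn (fun v => c u v) (Ioc 0 1) volume := by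
    intro u hu
    by_contra hcon
    have := hc_marg2 u hu
    rw [intervalIntegral.integral_of_le zero_le_one, integral_undef hcon] at this
    norm_num at this
  -- h basic facts
  have h0 : ∀ v, h 0 v = 0 := fun v => by rw [hdef, intervalIntegral.integral_same]
  have h1 : ∀ v ∈ Ioo (0:ℝ) 1, h 1 v = 1 := fun v hv => by rw [hdef]; exact hc_marg1 v hv
  have hmonoh : ∀ v ∈ Ioo (0:ℝ) 1, StrictMonoOn (fun u => h u v) (Icc 0 1) := by
    intro v hv a ha b hb hab
    have hIa : IntervalIntegrable (fun s => c s v) volume 0 a :=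
      (intervalIntegrable_iff_integrableOn_Ioc_of_le ha.1).2
        ((hInt1 v hv).mono_set (Ioc_subset_Ioc le_rfl ha.2))
    have hIb : IntervalIntegrable (fun s => c s v) volume 0 b :=
      (intervalIntegrable_iff_integrableOn_Ioc_of_le hb.1).2
        ((hInt1 v hv).mono_set (Ioc_subset_Ioc le_rfl hb.2))
    have hIab : IntervalIntegrable (fun s => c s v) volume a b :=
      (intervalIntegrable_iff_integrableOn_Ioc_of_le hab.le).2
        ((hInt1 v hv).mono_set (Ioc_subset_Ioc ha.1 hb.2))
    have hsub : h b v - h a v = ∫ s in a..b, c s v := by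
      rw [hdef, hdef, intervalIntegral.integral_interval_sub_left hIb hIa]
    have hpos : 0 < ∫ s in a..b, c s v :=
      intervalIntegral.intervalIntegral_pos_of_pos_on hIab
        (fun s hs => hc_pos s ⟨lt_of_le_of_lt ha.1 hs.1, lt_of_lt_of_le hs.2 hb.2⟩ v hv) hab
    simp only
    linarith
  have hhmem : ∀ v ∈ Ioo (0:ℝ) 1, ∀ a ∈ Icc (0:ℝ) 1, h a v ∈ Icc (0:ℝ) 1 := by
    intro v hv a ha
    constructor
    · have := (hmonoh v hv).monotoneOn ⟨le_rfl, zero_le_one⟩ ha ha.1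
      rwa [h0] at this
    · have := (hmonoh v hv).monotoneOn ha ⟨zero_le_one, le_rfl⟩ ha.2
      rwa [h1 v hv] at this
  -- the key pointwise equivalence
  have hequiv : ∀ ω, U ω ∈ Ioo (0:ℝ) 1 → ∀ y : ℝ,
      (Y ω ≤ y ↔ U ω ≤ h (FY y) (FX (X ω))) := by
    intro ω hω y
    set v := FX (X ω) with hv
    have hvmem : v ∈ Ioo (0:ℝ) 1 := hFXrange _
    obtain ⟨hw1, -, hw3⟩ := hhinv v hvmem (U ω) (Ioo_subset_Icc_self hω)
    set w := hinv (U ω) v with hwdef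
    have hw0 : w ≠ 0 := by
      intro hww
      rw [hww, h0] at hw1
      exact absurd hw1.symm (ne_of_gt hω.1)
    have hw1' : w ≠ 1 := by
      intro hww
      rw [hww, h1 v hvmem] at hw1
      exact absurd hw1.symm (ne_of_lt hω.2)
    have hwmem : w ∈ Ioo (0:ℝ) 1 :=
      ⟨lt_of_le_of_ne hw3.1 (Ne.symm hw0), lt_of_le_of_ne hw3.2 hw1'⟩
    have hFYw : FY (Y ω) = w := by rw [hY ω]; exact hFYinv.2 w hwmem
    constructor
    · intro hyy
      have : FY (Y ω) ≤ FY y := hFYmono.monotone hyy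
      rw [hFYw] at this
      calc U ω = h w v := hw1.symm
        _ ≤ h (FY y) v := (hmonoh v hvmem).monotoneOn hw3
            (Ioo_subset_Icc_self (hFYrange y)) this
    · intro huu
      rw [← hw1] at huu
      have hwle : w ≤ FY y :=
        ((hmonoh v hvmem).le_iff_le hw3 (Ioo_subset_Icc_self (hFYrange y))).1 huu
      have : FY (Y ω) ≤ FY y := by rw [hFYw]; exact hwle
      exact hFYmono.le_iff_le.1 this
  -- law of X
  have hlawX : μ.map X = volume.withDensity fun t => ENNReal.ofReal (fX t) := by
    haveI := aux_fin hfXpos hFX hFXmono fun x => (hFXrange x).2.le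
    haveI : IsProbabilityMeasure (μ.map X) := Measure.isProbabilityMeasure_map hXmeas.aemeasurable
    refine Measure.ext_of_Iic (μ.map X) _ fun a => ?_
    rw [Measure.map_apply hXmeas measurableSet_Iic, aux_cdf hfXpos hFX hFXmono]
    exact hXcdf a
  -- law of U
  have hlawU : μ.map U = volume.restrict (Icc 0 1) := by
    haveI : IsProbabilityMeasure (μ.map U) := Measure.isProbabilityMeasure_map hUmeas.aemeasurable
    refine Measure.ext_of_Iic (μ.map U) _ fun a => ?_
    rw [Measure.map_apply hUmeas measurableSet_Iic, Measure.restrict_apply measurableSet_Iic]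
    rcases lt_or_ge a 0 with ha | ha
    · have h1 : U ⁻¹' Iic a ⊆ {ω | U ω ∈ Ioo (0:ℝ) 1}ᶜ := by
        intro ω (hω : U ω ≤ a)
        simp only [mem_compl_iff, mem_setOf_eq, mem_Ioo, not_and, not_lt]
        intro h'
        exact absurd (hω.trans ha.le) (not_le.2 h')
      have h2 : Iic a ∩ Icc 0 1 = ∅ :=
        eq_empty_iff_forall_notMem.2 fun u ⟨hu1, hu2, _⟩ =>
          absurd (lt_of_le_of_lt hu1 ha) (not_lt.2 hu2)
      have h3 : μ {ω | U ω ∈ Ioo (0:ℝ) 1}ᶜ = 0 := by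
        rw [ae_iff] at hU01; exact hU01
      rw [measure_mono_null h1 h3, h2]
      simp
    rcases le_or_gt a 1 with ha1 | ha1
    · have h2 : Iic a ∩ Icc 0 1 = Icc 0 a := by
        ext u
        constructor
        · rintro ⟨h1, h2, _⟩; exact ⟨h2, h1⟩
        · rintro ⟨h1, h2⟩; exact ⟨h2, h1, h2.trans ha1⟩
      rw [h2, Real.volume_Icc, sub_zero]
      exact hUunif a ⟨ha, ha1⟩
    · have h2 : Iic a ∩ Icc 0 1 = Icc 0 1 :=
        inter_eq_self_of_subset_right fun u hu => hu.2.trans ha1.le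
      have h3 : U ⁻¹' Iic 1 ⊆ U ⁻¹' Iic a := fun ω hω => le_trans hω ha1.le
      have h4 : μ (U ⁻¹' Iic a) = 1 := by
        refine le_antisymm prob_le_one ?_
        calc (1:ENNReal) = μ (U ⁻¹' Iic 1) := by
              rw [show U ⁻¹' Iic 1 = {ω | U ω ≤ 1} from rfl, hUunif 1 ⟨zero_le_one, le_rfl⟩,
                ENNReal.ofReal_one]
          _ ≤ μ (U ⁻¹' Iic a) := measure_mono h3
      rw [h2, h4, Real.volume_Icc, sub_zero, ENNReal.ofReal_one]
  -- tail behavior of FX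
  have hXseq := tendsto_measure_iUnion_atTop (μ := μ) (s := fun n : ℕ => {ω | X ω ≤ (n:ℝ)})
      (fun a b hab ω (hω : X ω ≤ (a:ℝ)) => hω.trans (by exact_mod_cast hab))
  have hXuniv : (⋃ n : ℕ, {ω | X ω ≤ (n:ℝ)}) = univ :=
    eq_univ_of_forall fun ω => mem_iUnion.2 ⟨⌈X ω⌉₊, show X ω ≤ _ from Nat.le_ceil _⟩
  rw [hXuniv, measure_univ] at hXseq
  have hFXtop : Tendsto FX atTop (𝓝 1) := by
    apply aux_tendsto_top hFXmono hFXrange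
    have hfe : (μ ∘ fun n : ℕ => {ω | X ω ≤ (n:ℝ)}) = fun n : ℕ => ENNReal.ofReal (FX n) :=
      funext fun n => hXcdf _
    have h2 : Tendsto (fun n : ℕ => ENNReal.ofReal (FX n)) atTop (𝓝 (ENNReal.ofReal 1)) := by
      rw [ENNReal.ofReal_one]; rwa [hfe] at hXseq
    exact aux_ofReal_tendsto (fun n => (hFXrange _).1.le) zero_le_one h2
  have hFXbot : Tendsto FX atBot (𝓝 0) := by
    have hanti : Antitone fun n : ℕ => {ω | X ω ≤ -(n:ℝ)} := by
      intro a b hab ω (hω : X ω ≤ -(b:ℝ))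
      refine le_trans hω ?_
      simp only [neg_le_neg_iff]
      exact_mod_cast hab
    have hmeasn : ∀ n : ℕ, NullMeasurableSet {ω | X ω ≤ -(n:ℝ)} μ :=
      fun n => (hXmeas measurableSet_Iic).nullMeasurableSet
    have hseq := tendsto_measure_iInter_atTop hmeasn hanti ⟨0, measure_ne_top μ _⟩
    have hempty : (⋂ n : ℕ, {ω | X ω ≤ -(n:ℝ)}) = ∅ := by
      apply eq_empty_iff_forall_notMem.2
      intro ω hω
      obtain ⟨n, hn⟩ := exists_nat_gt (-(X ω))
      have := mem_iInter.1 hω n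
      simp only [mem_setOf_eq] at this
      linarith
    rw [hempty, measure_empty] at hseq
    apply aux_tendsto_bot hFXmono hFXrange
    have hfe : (μ ∘ fun n : ℕ => {ω | X ω ≤ -(n:ℝ)})
        = fun n : ℕ => ENNReal.ofReal (FX (-(n:ℝ))) := funext fun n => hXcdf _
    have h2 : Tendsto (fun n : ℕ => ENNReal.ofReal (FX (-(n:ℝ)))) atTop
        (𝓝 (ENNReal.ofReal 0)) := by
      rw [ENNReal.ofReal_zero]; rwa [hfe] at hseq
    exact aux_ofReal_tendsto (fun n => (hFXrange _).1.le) le_rfl h2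
  -- measurability of h slices
  have hmeas_h : ∀ a : ℝ, 0 ≤ a → Measurable fun v => h a v := by
    intro a ha
    have hsm : StronglyMeasurable (Function.uncurry fun v s => c s v) :=
      (hc_meas.comp measurable_swap).stronglyMeasurable
    have hm := (hsm.integral_prod_right (ν := volume.restrict (Ioc 0 a))).measurable
    have heq : (fun v => h a v) = fun v => ∫ s in Ioc 0 a, c s v := by
      funext v; rw [hdef, intervalIntegral.integral_of_le ha]
    rw [heq]
    exact hm
  -- joint law of (X, U)
  have hproduct : μ.map (fun ω => (X ω, U ω)) = (μ.map X).prod (μ.map U) :=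
    (indepFun_iff_map_prod_eq_prod_map_map hXmeas.aemeasurable hUmeas.aemeasurable).1 hindep
  -- the main computation
  have hcomp : ∀ g : ℝ → ℝ, Measurable g → (∀ t, g t ∈ Icc (0:ℝ) 1) → ∀ B : Set ℝ,
      MeasurableSet B →
      μ {ω | X ω ∈ B ∧ U ω ≤ g (X ω)} = ∫⁻ t in B, ENNReal.ofReal (g t) ∂(μ.map X) := by
    intro g hg hg01 B hB
    have hTmeas : MeasurableSet {p : ℝ × ℝ | p.1 ∈ B ∧ p.2 ≤ g p.1} :=
      (hB.preimage measurable_fst).inter (measurableSet_le measurable_snd (hg.comp measurable_fst))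
    have hset : {ω | X ω ∈ B ∧ U ω ≤ g (X ω)}
        = (fun ω => (X ω, U ω)) ⁻¹' {p : ℝ × ℝ | p.1 ∈ B ∧ p.2 ≤ g p.1} := rfl
    rw [hset, ← Measure.map_apply (hXmeas.prodMk hUmeas) hTmeas, hproduct,
      Measure.prod_apply hTmeas]
    have hfib : ∀ t : ℝ, (μ.map U) (Prod.mk t ⁻¹' {p : ℝ × ℝ | p.1 ∈ B ∧ p.2 ≤ g p.1})
        = B.indicator (fun t => ENNReal.ofReal (g t)) t := by
      intro t
      by_cases ht : t ∈ B
      · have hpre : Prod.mk t ⁻¹' {p : ℝ × ℝ | p.1 ∈ B ∧ p.2 ≤ g p.1} = Iic (g t) := by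
          ext u; simp [ht]
        rw [hpre, hlawU, Measure.restrict_apply measurableSet_Iic]
        have h2 : Iic (g t) ∩ Icc 0 1 = Icc 0 (g t) := by
          ext u; constructor
          · rintro ⟨hh1, hh2, _⟩; exact ⟨hh2, hh1⟩
          · rintro ⟨hh1, hh2⟩; exact ⟨hh2, hh1, hh2.trans (hg01 t).2⟩
        rw [h2, Real.volume_Icc, sub_zero, indicator_of_mem ht]
      · have hpre : Prod.mk t ⁻¹' {p : ℝ × ℝ | p.1 ∈ B ∧ p.2 ≤ g p.1} = ∅ := by
          ext u; simp [ht]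
        rw [hpre, measure_empty, indicator_of_notMem ht]
    rw [lintegral_congr hfib, lintegral_indicator hB]
  -- converting lintegrals with respect to the law of X to real integrals
  have hsetcalc : ∀ g : ℝ → ℝ, Measurable g → (∀ t, g t ∈ Icc (0:ℝ) 1) → ∀ x : ℝ,
      ∫⁻ t in Iic x, ENNReal.ofReal (g t) ∂(μ.map X)
        = ENNReal.ofReal (∫ t in Iic x, g t * fX t) := by
    intro g hg hg01 x
    rw [hlawX, restrict_withDensity measurableSet_Iic,
      lintegral_withDensity_eq_lintegral_mul _ hfX.ennreal_ofReal hg.ennreal_ofReal]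
    have hint : IntegrableOn (fun t => g t * fX t) (Iic x) volume := by
      refine Integrable.mono (aux_int hfXpos hFX hFXmono x) (hg.mul hfX).aestronglyMeasurable ?_
      refine ae_of_all _ fun t => ?_
      rw [Real.norm_eq_abs, Real.norm_eq_abs, abs_of_nonneg (mul_nonneg (hg01 t).1 (hfXpos t)),
        abs_of_nonneg (hfXpos t)]
      nlinarith [(hg01 t).1, (hg01 t).2, hfXpos t]
    rw [ofReal_integral_eq_lintegral_ofReal hint
      (ae_of_all _ fun t => mul_nonneg (hg01 t).1 (hfXpos t))]
    apply lintegral_congr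
    intro t
    simp only [Pi.mul_apply]
    rw [← ENNReal.ofReal_mul (hfXpos t), mul_comm]
  -- claim 2
  have claim2 : ∀ x y : ℝ, μ {ω | X ω ≤ x ∧ Y ω ≤ y}
      = ENNReal.ofReal (∫ t in Iic x, h (FY y) (FX t) * fX t) := by
    intro x y
    have hgmeas : Measurable fun t => h (FY y) (FX t) :=
      (hmeas_h (FY y) (hFYrange y).1.le).comp hFXcont.measurable
    have hg01 : ∀ t, h (FY y) (FX t) ∈ Icc (0:ℝ) 1 := fun t =>
      hhmem (FX t) (hFXrange t) (FY y) (Ioo_subset_Icc_self (hFYrange y))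
    have hae : {ω | X ω ≤ x ∧ Y ω ≤ y}
        =ᵐ[μ] {ω | X ω ∈ Iic x ∧ U ω ≤ h (FY y) (FX (X ω))} := by
      refine eventuallyEq_set.2 ?_
      filter_upwards [hU01] with ω hω
      simp only [mem_setOf_eq, mem_Iic]
      rw [hequiv ω hω y]
    rw [measure_congr hae, hcomp _ hgmeas hg01 (Iic x) measurableSet_Iic,
      hsetcalc _ hgmeas hg01 x]
  -- uniform integral of h over the unit interval
  have hIoo : ∀ a ∈ Ioo (0:ℝ) 1,
      (∫⁻ v in Ioo (0:ℝ) 1, ENNReal.ofReal (h a v)) = ENNReal.ofReal a := by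
    intro a ha
    have step1 : ∀ v ∈ Ioo (0:ℝ) 1, ENNReal.ofReal (h a v)
        = ∫⁻ s in Ioc 0 a, ENNReal.ofReal (c s v) := by
      intro v hv
      rw [hdef, intervalIntegral.integral_of_le ha.1.le]
      exact ofReal_integral_eq_lintegral_ofReal
        ((hInt1 v hv).mono_set (Ioc_subset_Ioc le_rfl ha.2.le))
        (ae_restrict_of_forall_mem measurableSet_Ioc fun s hs =>
          (hc_pos s ⟨hs.1, lt_of_le_of_lt hs.2 ha.2⟩ v hv).le)
    rw [setLIntegral_congr_fun measurableSet_Ioo step1,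
      lintegral_lintegral_swap (((hc_meas.comp measurable_swap).ennreal_ofReal).aemeasurable)]
    have inner : ∀ s ∈ Ioc (0:ℝ) a, (∫⁻ v in Ioo (0:ℝ) 1, ENNReal.ofReal (c s v)) = 1 := by
      intro s hs
      have hs' : s ∈ Ioo (0:ℝ) 1 := ⟨hs.1, lt_of_le_of_lt hs.2 ha.2⟩
      rw [← ofReal_integral_eq_lintegral_ofReal
        ((hInt2 s hs').mono_set Ioo_subset_Ioc_self)
        (ae_restrict_of_forall_mem measurableSet_Ioo fun v hv => (hc_pos s hs' v hv).le)]
      rw [setIntegral_congr_set Ioo_ae_eq_Ioc, ← intervalIntegral.integral_of_le zero_le_one,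
        hc_marg2 s hs', ENNReal.ofReal_one]
    rw [setLIntegral_congr_fun measurableSet_Ioc inner]
    simp [Real.volume_Ioc]
  -- claim 3
  have claim3 : ∀ y : ℝ, μ {ω | Y ω ≤ y} = ENNReal.ofReal (FY y) := by
    intro y
    have hgmeas : Measurable fun t => h (FY y) (FX t) :=
      (hmeas_h (FY y) (hFYrange y).1.le).comp hFXcont.measurable
    have hg01 : ∀ t, h (FY y) (FX t) ∈ Icc (0:ℝ) 1 := fun t =>
      hhmem (FX t) (hFXrange t) (FY y) (Ioo_subset_Icc_self (hFYrange y))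
    have hae : {ω | Y ω ≤ y}
        =ᵐ[μ] {ω | X ω ∈ (univ : Set ℝ) ∧ U ω ≤ h (FY y) (FX (X ω))} := by
      refine eventuallyEq_set.2 ?_
      filter_upwards [hU01] with ω hω
      simp only [mem_setOf_eq, mem_univ, true_and]
      exact hequiv ω hω y
    rw [measure_congr hae, hcomp _ hgmeas hg01 univ MeasurableSet.univ, Measure.restrict_univ,
      hlawX]
    have hmap := lintegral_map (μ := volume.withDensity fun t => ENNReal.ofReal (fX t))
      ((hmeas_h (FY y) (hFYrange y).1.le).ennreal_ofReal) hFXcont.measurable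
    rw [← hmap, aux_map hfXpos hFX hFXmono hFXcont hFXrange hFXtop hFXbot,
      hIoo (FY y) (hFYrange y)]
  -- tail behavior of FY, via claim3
  have hFYtop : Tendsto FY atTop (𝓝 1) := by
    apply aux_tendsto_top hFYmono hFYrange
    have hAY : ∀ n : ℕ, μ {ω | U ω ≤ h (FY (n:ℝ)) (FX (X ω))} = ENNReal.ofReal (FY (n:ℝ)) := by
      intro n
      have hae : {ω | U ω ≤ h (FY (n:ℝ)) (FX (X ω))} =ᵐ[μ] {ω | Y ω ≤ (n:ℝ)} := by
        refine eventuallyEq_set.2 ?_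
        filter_upwards [hU01] with ω hω
        exact (hequiv ω hω n).symm
      rw [measure_congr hae, claim3]
    have hmono' : Monotone fun n : ℕ => {ω | U ω ≤ h (FY (n:ℝ)) (FX (X ω))} := by
      intro m n hmn ω (hω : U ω ≤ h (FY (m:ℝ)) (FX (X ω)))
      refine hω.trans ?_
      exact (hmonoh (FX (X ω)) (hFXrange _)).monotoneOn
        (Ioo_subset_Icc_self (hFYrange _)) (Ioo_subset_Icc_self (hFYrange _))
        (hFYmono.monotone (by exact_mod_cast hmn))
    have hseq := tendsto_measure_iUnion_atTop (μ := μ) hmono'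
    have hun : μ (⋃ n : ℕ, {ω | U ω ≤ h (FY (n:ℝ)) (FX (X ω))}) = 1 := by
      have hmem : ∀ᵐ ω ∂μ, ω ∈ ⋃ n : ℕ, {ω | U ω ≤ h (FY (n:ℝ)) (FX (X ω))} := by
        filter_upwards [hU01] with ω hω
        obtain ⟨n, hn⟩ := exists_nat_ge (Y ω)
        exact mem_iUnion.2 ⟨n, (hequiv ω hω n).1 hn⟩
      have h0' : μ (⋃ n : ℕ, {ω | U ω ≤ h (FY (n:ℝ)) (FX (X ω))})ᶜ = 0 := by
        rw [ae_iff] at hmem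
        exact hmem
      rw [measure_congr (ae_eq_univ.2 h0'), measure_univ]
    rw [hun] at hseq
    have hfe : (μ ∘ fun n : ℕ => {ω | U ω ≤ h (FY (n:ℝ)) (FX (X ω))})
        = fun n : ℕ => ENNReal.ofReal (FY (n:ℝ)) := funext fun n => hAY n
    have h2 : Tendsto (fun n : ℕ => ENNReal.ofReal (FY (n:ℝ))) atTop
        (𝓝 (ENNReal.ofReal 1)) := by
      rw [ENNReal.ofReal_one]; rwa [hfe] at hseq
    exact aux_ofReal_tendsto (fun n => (hFYrange _).1.le) zero_le_one h2
  have hFYbot : Tendsto FY atBot (𝓝 0) := by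
    apply aux_tendsto_bot hFYmono hFYrange
    have hAY : ∀ n : ℕ, μ {ω | U ω ≤ h (FY (-(n:ℝ))) (FX (X ω))}
        = ENNReal.ofReal (FY (-(n:ℝ))) := by
      intro n
      have hae : {ω | U ω ≤ h (FY (-(n:ℝ))) (FX (X ω))} =ᵐ[μ] {ω | Y ω ≤ -(n:ℝ)} := by
        refine eventuallyEq_set.2 ?_
        filter_upwards [hU01] with ω hω
        exact (hequiv ω hω _).symm
      rw [measure_congr hae, claim3]
    have hanti : Antitone fun n : ℕ => {ω | U ω ≤ h (FY (-(n:ℝ))) (FX (X ω))} := by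
      intro m n hmn ω (hω : U ω ≤ h (FY (-(n:ℝ))) (FX (X ω)))
      refine hω.trans ?_
      refine (hmonoh (FX (X ω)) (hFXrange _)).monotoneOn
        (Ioo_subset_Icc_self (hFYrange _)) (Ioo_subset_Icc_self (hFYrange _))
        (hFYmono.monotone ?_)
      simp only [neg_le_neg_iff]
      exact_mod_cast hmn
    have hmeasn : ∀ n : ℕ, NullMeasurableSet {ω | U ω ≤ h (FY (-(n:ℝ))) (FX (X ω))} μ := by
      intro n
      exact (measurableSet_le hUmeas (((hmeas_h (FY (-(n:ℝ))) (hFYrange _).1.le).comp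
        hFXcont.measurable).comp hXmeas)).nullMeasurableSet
    have hseq := tendsto_measure_iInter_atTop hmeasn hanti ⟨0, measure_ne_top μ _⟩
    have hint0 : μ (⋂ n : ℕ, {ω | U ω ≤ h (FY (-(n:ℝ))) (FX (X ω))}) = 0 := by
      rw [measure_eq_zero_iff_ae_notMem]
      filter_upwards [hU01] with ω hω hmem
      obtain ⟨n, hn⟩ := exists_nat_gt (-(Y ω))
      have := (hequiv ω hω (-(n:ℝ))).2 (mem_iInter.1 hmem n)
      linarith
    rw [hint0] at hseq
    have hfe : (μ ∘ fun n : ℕ => {ω | U ω ≤ h (FY (-(n:ℝ))) (FX (X ω))})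
        = fun n : ℕ => ENNReal.ofReal (FY (-(n:ℝ))) := funext fun n => hAY n
    have h2 : Tendsto (fun n : ℕ => ENNReal.ofReal (FY (-(n:ℝ)))) atTop
        (𝓝 (ENNReal.ofReal 0)) := by
      rw [ENNReal.ofReal_zero]; rwa [hfe] at hseq
    exact aux_ofReal_tendsto (fun n => (hFYrange _).1.le) le_rfl h2
  have hmapFY : (volume.withDensity fun s => ENNReal.ofReal (fY s)).map FY
      = volume.restrict (Ioo 0 1) :=
    aux_map hfYpos hFY hFYmono hFYcont hFYrange hFYtop hFYbot
  -- a measurable version of Y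
  have hZmeas : Measurable fun ω => if U ω ∈ Ioo (0:ℝ) 1 then Y ω else 0 := by
    apply measurable_of_Iic
    intro y
    have hset : (fun ω => if U ω ∈ Ioo (0:ℝ) 1 then Y ω else 0) ⁻¹' Iic y
        = ({ω | U ω ∈ Ioo (0:ℝ) 1} ∩ {ω | U ω ≤ h (FY y) (FX (X ω))})
          ∪ ({ω | U ω ∈ Ioo (0:ℝ) 1}ᶜ ∩ {ω | (0:ℝ) ≤ y}) := by
      ext ω
      by_cases hω : U ω ∈ Ioo (0:ℝ) 1
      · simp only [mem_preimage, mem_Iic, if_pos hω, mem_union, mem_inter_iff, mem_setOf_eq,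
          mem_compl_iff, hω, not_true_eq_false, false_and, or_false, true_and]
        exact hequiv ω hω y
      · simp only [mem_preimage, mem_Iic, if_neg hω, mem_union, mem_inter_iff, mem_setOf_eq,
          mem_compl_iff]
        constructor
        · intro h'; exact Or.inr ⟨hω, h'⟩
        · rintro (⟨h1', -⟩ | ⟨-, h2'⟩)
          · exact absurd h1' hω
          · exact h2'
    rw [hset]
    refine MeasurableSet.union ?_ ?_
    · exact (hUmeas measurableSet_Ioo).inter
        (measurableSet_le hUmeas (((hmeas_h (FY y) (hFYrange y).1.le).comp
          hFXcont.measurable).comp hXmeas))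
    · exact (hUmeas measurableSet_Ioo).compl.inter (MeasurableSet.const _)
  -- pointwise lintegral for the final conversion
  have hmul : ∀ g : ℝ → ℝ, Measurable g → (∀ t, g t ∈ Icc (0:ℝ) 1) → ∀ x : ℝ,
      (∫⁻ t in Iic x, ENNReal.ofReal (g t * fX t))
        = ENNReal.ofReal (∫ t in Iic x, g t * fX t) := by
    intro g hg hg01 x
    have hint : IntegrableOn (fun t => g t * fX t) (Iic x) volume := by
      refine Integrable.mono (aux_int hfXpos hFX hFXmono x) (hg.mul hfX).aestronglyMeasurable ?_
      refine ae_of_all _ fun t => ?_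
      rw [Real.norm_eq_abs, Real.norm_eq_abs, abs_of_nonneg (mul_nonneg (hg01 t).1 (hfXpos t)),
        abs_of_nonneg (hfXpos t)]
      nlinarith [(hg01 t).1, (hg01 t).2, hfXpos t]
    exact (ofReal_integral_eq_lintegral_ofReal hint
      (ae_of_all _ fun t => mul_nonneg (hg01 t).1 (hfXpos t))).symm
  -- inner integral for the joint density
  have hinner : ∀ y t : ℝ,
      (∫⁻ s in Iic y, ENNReal.ofReal (fX t * fY s * c (FY s) (FX t)))
        = ENNReal.ofReal (h (FY y) (FX t) * fX t) := by
    intro y t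
    have hv : FX t ∈ Ioo (0:ℝ) 1 := hFXrange t
    have hcm : Measurable fun s => c (FY s) (FX t) :=
      (hmeas_cv (FX t)).comp hFYcont.measurable
    have e1 : ∀ s : ℝ, ENNReal.ofReal (fX t * fY s * c (FY s) (FX t))
        = ENNReal.ofReal (fX t)
            * (ENNReal.ofReal (fY s) * ENNReal.ofReal (c (FY s) (FX t))) := by
      intro s
      rw [mul_assoc, ENNReal.ofReal_mul (hfXpos t), ENNReal.ofReal_mul (hfYpos s)]
    simp only [e1]
    rw [lintegral_const_mul _ (show Measurable fun s => ENNReal.ofReal (fY s) * ENNReal.ofReal (c (FY s) (FX t)) from hfY.ennreal_ofReal.mul hcm.ennreal_ofReal)]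
    have key : (∫⁻ s in Iic y, ENNReal.ofReal (fY s) * ENNReal.ofReal (c (FY s) (FX t)))
        = ENNReal.ofReal (h (FY y) (FX t)) := by
      have e2 : (∫⁻ s in Iic y, ENNReal.ofReal (fY s) * ENNReal.ofReal (c (FY s) (FX t)))
          = ∫⁻ s in Iic y, ENNReal.ofReal (c (FY s) (FX t))
              ∂(volume.withDensity fun s => ENNReal.ofReal (fY s)) :=
        (setLIntegral_withDensity_eq_setLIntegral_mul volume
          hfY.ennreal_ofReal hcm.ennreal_ofReal measurableSet_Iic).symm
      rw [e2]
      have e3 : (∫⁻ s in Iic y, ENNReal.ofReal (c (FY s) (FX t))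
            ∂(volume.withDensity fun s => ENNReal.ofReal (fY s)))
          = ∫⁻ u in Iic (FY y), ENNReal.ofReal (c u (FX t))
              ∂((volume.withDensity fun s => ENNReal.ofReal (fY s)).map FY) := by
        rw [← lintegral_indicator measurableSet_Iic, ← lintegral_indicator measurableSet_Iic,
          lintegral_map (((hmeas_cv (FX t)).ennreal_ofReal).indicator measurableSet_Iic)
            hFYcont.measurable]
        apply lintegral_congr
        intro s
        by_cases hs : s ∈ Iic y
        · rw [indicator_of_mem hs,
            indicator_of_mem (show FY s ∈ Iic (FY y) from hFYmono.monotone hs)]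
        · rw [indicator_of_notMem hs,
            indicator_of_notMem
              (show FY s ∉ Iic (FY y) from fun hmem => hs (hFYmono.le_iff_le.1 hmem))]
      rw [e3, hmapFY, Measure.restrict_restrict measurableSet_Iic]
      have hIset : Iic (FY y) ∩ Ioo 0 1 = Ioc 0 (FY y) := by
        ext u
        constructor
        · rintro ⟨h1', h2', _⟩; exact ⟨h2', h1'⟩
        · rintro ⟨h1', h2'⟩; exact ⟨h2', h1', lt_of_le_of_lt h2' (hFYrange y).2⟩
      rw [hIset, ← ofReal_integral_eq_lintegral_ofReal
        ((hInt1 (FX t) hv).mono_set (Ioc_subset_Ioc le_rfl (hFYrange y).2.le))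
        (ae_restrict_of_forall_mem measurableSet_Ioc fun u hu =>
          (hc_pos u ⟨hu.1, lt_of_le_of_lt hu.2 (hFYrange y).2⟩ (FX t) hv).le),
        hdef, intervalIntegral.integral_of_le (hFYrange y).1.le]
    rw [key, ← ENNReal.ofReal_mul (hfXpos t), mul_comm]
  -- the density measure on rectangles
  have hρmeas : Measurable fun p : ℝ × ℝ =>
      ENNReal.ofReal (fX p.1 * fY p.2 * c (FY p.2) (FX p.1)) := by
    apply Measurable.ennreal_ofReal
    exact ((hfX.comp measurable_fst).mul (hfY.comp measurable_snd)).mul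
      (hc_meas.comp ((hFYcont.measurable.comp measurable_snd).prodMk
        (hFXcont.measurable.comp measurable_fst)))
  have hρrect : ∀ x y : ℝ,
      (volume.withDensity fun p : ℝ × ℝ =>
        ENNReal.ofReal (fX p.1 * fY p.2 * c (FY p.2) (FX p.1))) (Iic x ×ˢ Iic y)
      = ENNReal.ofReal (∫ t in Iic x, h (FY y) (FX t) * fX t) := by
    intro x y
    have hgmeas : Measurable fun t => h (FY y) (FX t) :=
      (hmeas_h (FY y) (hFYrange y).1.le).comp hFXcont.measurable
    have hg01 : ∀ t, h (FY y) (FX t) ∈ Icc (0:ℝ) 1 := fun t =>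
      hhmem (FX t) (hFXrange t) (FY y) (Ioo_subset_Icc_self (hFYrange y))
    rw [withDensity_apply _ (measurableSet_Iic.prod measurableSet_Iic),
      Measure.volume_eq_prod, ← Measure.prod_restrict,
      lintegral_prod _ hρmeas.aemeasurable]
    have hstep : (∫⁻ t, ∫⁻ s, ENNReal.ofReal (fX t * fY s * c (FY s) (FX t))
          ∂(volume.restrict (Iic y)) ∂(volume.restrict (Iic x)))
        = ∫⁻ t in Iic x, ENNReal.ofReal (h (FY y) (FX t) * fX t) :=
      lintegral_congr fun t => hinner y t
    rw [hstep, hmul _ hgmeas hg01 x]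
  -- the generating π-system of rectangles
  have hCspan : IsCountablySpanning (range (Iic : ℝ → Set ℝ)) :=
    ⟨fun n => Iic (n:ℝ), fun n => mem_range_self _, aux_univ_eq⟩
  have hR : (inferInstance : MeasurableSpace ℝ)
      = MeasurableSpace.generateFrom (range (Iic : ℝ → Set ℝ)) := by
    rw [BorelSpace.measurable_eq (α := ℝ)]
    exact borel_eq_generateFrom_Iic ℝ
  have hgen : (inferInstance : MeasurableSpace (ℝ × ℝ)) = MeasurableSpace.generateFrom
      (image2 (· ×ˢ ·) (range (Iic : ℝ → Set ℝ)) (range (Iic : ℝ → Set ℝ))) := by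
    have h2 : (inferInstance : MeasurableSpace (ℝ × ℝ))
        = @Prod.instMeasurableSpace ℝ ℝ
            (MeasurableSpace.generateFrom (range Iic))
            (MeasurableSpace.generateFrom (range Iic)) := by
      rw [← hR]
    rw [h2]
    exact generateFrom_prod_eq hCspan hCspan
  have hpi : IsPiSystem (image2 (· ×ˢ ·) (range (Iic : ℝ → Set ℝ)) (range (Iic : ℝ → Set ℝ))) := by
    rintro s hs t ht -
    obtain ⟨s1, ⟨a, rfl⟩, s2, ⟨b, rfl⟩, rfl⟩ := hs
    obtain ⟨t1, ⟨a', rfl⟩, t2, ⟨b', rfl⟩, rfl⟩ := ht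
    rw [prod_inter_prod, Iic_inter_Iic, Iic_inter_Iic]
    exact mem_image2_of_mem (mem_range_self _) (mem_range_self _)
  -- assembling claim 1
  refine ⟨?_, claim2, claim3⟩
  have hYZ : (fun ω => (X ω, Y ω))
      =ᵐ[μ] fun ω => (X ω, if U ω ∈ Ioo (0:ℝ) 1 then Y ω else 0) := by
    filter_upwards [hU01] with ω hω
    rw [if_pos hω]
  rw [Measure.map_congr hYZ]
  haveI : IsProbabilityMeasure
      (μ.map fun ω => (X ω, if U ω ∈ Ioo (0:ℝ) 1 then Y ω else 0)) :=
    Measure.isProbabilityMeasure_map (hXmeas.prodMk hZmeas).aemeasurable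
  refine ext_of_generate_finite _ hgen hpi ?_ ?_
  · rintro _ ⟨_, ⟨x, rfl⟩, _, ⟨y, rfl⟩, rfl⟩
    rw [Measure.map_apply (hXmeas.prodMk hZmeas) (measurableSet_Iic.prod measurableSet_Iic)]
    have hpre : (fun ω => (X ω, if U ω ∈ Ioo (0:ℝ) 1 then Y ω else 0)) ⁻¹' (Iic x ×ˢ Iic y)
        = {ω | X ω ≤ x ∧ (if U ω ∈ Ioo (0:ℝ) 1 then Y ω else 0) ≤ y} := rfl
    have hae : {ω | X ω ≤ x ∧ (if U ω ∈ Ioo (0:ℝ) 1 then Y ω else 0) ≤ y}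
        =ᵐ[μ] {ω | X ω ≤ x ∧ Y ω ≤ y} := by
      refine eventuallyEq_set.2 ?_
      filter_upwards [hU01] with ω hω
      simp only [mem_setOf_eq, if_pos hω]
    rw [hpre, measure_congr hae, claim2 x y, hρrect x y]
  · rw [measure_univ]
    have hrectuniv : (⋃ n : ℕ, (Iic (n:ℝ)) ×ˢ (Iic (n:ℝ))) = univ := by
      refine eq_univ_of_forall fun p => ?_
      obtain ⟨n, hn⟩ := exists_nat_ge (max p.1 p.2)
      exact mem_iUnion.2 ⟨n, ⟨(le_max_left _ _).trans hn, (le_max_right _ _).trans hn⟩⟩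
    have hmono2 : Monotone fun n : ℕ => (Iic (n:ℝ)) ×ˢ (Iic (n:ℝ)) :=
      fun a b hab => prod_mono (aux_mono_Iic hab) (aux_mono_Iic hab)
    have ht1 := tendsto_measure_iUnion_atTop
      (μ := volume.withDensity fun p : ℝ × ℝ =>
        ENNReal.ofReal (fX p.1 * fY p.2 * c (FY p.2) (FX p.1))) hmono2
    rw [hrectuniv] at ht1
    have hmono3 : Monotone fun n : ℕ => {ω | X ω ≤ (n:ℝ) ∧ Y ω ≤ (n:ℝ)} := by
      intro a b hab ω ⟨h1', h2'⟩
      have : (a:ℝ) ≤ (b:ℝ) := by exact_mod_cast hab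
      exact ⟨h1'.trans this, h2'.trans this⟩
    have ht2 := tendsto_measure_iUnion_atTop (μ := μ) hmono3
    have huniv2 : (⋃ n : ℕ, {ω | X ω ≤ (n:ℝ) ∧ Y ω ≤ (n:ℝ)}) = univ := by
      refine eq_univ_of_forall fun ω => ?_
      obtain ⟨n, hn⟩ := exists_nat_ge (max (X ω) (Y ω))
      exact mem_iUnion.2 ⟨n, ⟨(le_max_left _ _).trans hn, (le_max_right _ _).trans hn⟩⟩
    rw [huniv2, measure_univ] at ht2
    have hfe : ((volume.withDensity fun p : ℝ × ℝ =>
          ENNReal.ofReal (fX p.1 * fY p.2 * c (FY p.2) (FX p.1)))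
            ∘ fun n : ℕ => (Iic (n:ℝ)) ×ˢ (Iic (n:ℝ)))
        = μ ∘ fun n : ℕ => {ω | X ω ≤ (n:ℝ) ∧ Y ω ≤ (n:ℝ)} :=
      funext fun n => by
        show (volume.withDensity _) _ = μ _
        rw [hρrect, ← claim2]
    rw [hfe] at ht1
    exact (tendsto_nhds_unique ht1 ht2).symm
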